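/- arXiv:1303.6672 — 5 statements merged into one kernel-verified Lean document; each statement's English description precedes it below -/
import Mathlib

section
/- For any nonempty closed convex cone C in R^d, the squared norm of the conic projection map x ↦ ‖Π_C(x)‖² is differentiable everywhere with gradient 2Π_C(x). -/
open MeasureTheory ProbabilityTheory Real
open scoped InnerProductSpace ENNReal NNReal Pointwise

/-- The standard Gaussian measure on `ℝ^d`. -/
noncomputable def stdGaussian (d : ℕ) : Measure (EuclideanSpace ℝ (Fin d)) :=
  (Measure.pi fun _ : Fin d => gaussianReal 0 1).map
    (MeasurableEquiv.toLp 2 (Fin d → ℝ))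

open scoped RealInnerProductSpace in
/-- Key algebraic estimate in an inner product space. -/
lemma aux_est {E : Type*} [NormedAddCommGroup E] [InnerProductSpace ℝ E]
    (x y a b : E)
    (hxa : ⟪x - a, a⟫ = 0) (hyb : ⟪y - b, b⟫ = 0)
    (hxb : ⟪x - a, b⟫ ≤ 0) (hya : ⟪y - b, a⟫ ≤ 0) :
    |‖b‖ ^ 2 - ‖a‖ ^ 2 - ⟪(2 : ℝ) • a, y - x⟫| ≤ ‖y - x‖ ^ 2 := by
  have hCS : ⟪y - x, b - a⟫ ≤ ‖y - x‖ * ‖b - a‖ := real_inner_le_norm _ _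
  have hab : ‖b - a‖ ^ 2 = ‖b‖ ^ 2 - 2 * ⟪b, a⟫ + ‖a‖ ^ 2 := norm_sub_sq_real b a
  have h1 : ⟪x, a⟫ = ‖a‖ ^ 2 := by
    have := hxa; rw [inner_sub_left, real_inner_self_eq_norm_sq] at this; linarith
  have h2 : ⟪y, b⟫ = ‖b‖ ^ 2 := by
    have := hyb; rw [inner_sub_left, real_inner_self_eq_norm_sq] at this; linarith
  have h3 : ⟪x, b⟫ ≤ ⟪a, b⟫ := by rw [inner_sub_left] at hxb; linarith
  have h4 : ⟪y, a⟫ ≤ ⟪b, a⟫ := by rw [inner_sub_left] at hya; linarith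
  have hexp : ⟪y - x, b - a⟫ = ⟪y, b⟫ - ⟪y, a⟫ - ⟪x, b⟫ + ⟪x, a⟫ := by
    rw [inner_sub_left, inner_sub_right, inner_sub_right]; ring
  have hgoal : ⟪(2 : ℝ) • a, y - x⟫ = 2 * ⟪y, a⟫ - 2 * ⟪x, a⟫ := by
    rw [real_inner_smul_left, inner_sub_right, real_inner_comm a y, real_inner_comm a x]; ring
  have hba : ⟪b, a⟫ = ⟪a, b⟫ := real_inner_comm _ _
  rw [abs_le]
  have hnn : (0:ℝ) ≤ ‖b - a‖ := norm_nonneg _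
  have hnn2 : (0:ℝ) ≤ ‖y - x‖ := norm_nonneg _
  constructor
  · nlinarith [sq_nonneg (‖b - a‖), sq_nonneg (‖y - x‖)]
  · nlinarith [sq_nonneg (‖y - x‖ - ‖b - a‖)]

set_option maxHeartbeats 1000000 in
/-- The map `x ↦ ‖Π_C x‖²` is differentiable everywhere with gradient `2 Π_C x`. -/
theorem gradient_sq_norm_proj (d : ℕ)
    (C : Set (EuclideanSpace ℝ (Fin d)))
    (hconv : Convex ℝ C) (hclosed : IsClosed C) (hne : C.Nonempty)
    (hcone : ∀ (t : ℝ), 0 < t → ∀ x ∈ C, t • x ∈ C)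
    (projC : EuclideanSpace ℝ (Fin d) → EuclideanSpace ℝ (Fin d))
    (hprojC : ∀ x, projC x ∈ C ∧ ∀ y ∈ C, ‖x - projC x‖ ≤ ‖x - y‖)
    (x : EuclideanSpace ℝ (Fin d)) :
    HasGradientAt (fun y => ‖projC y‖ ^ 2) ((2 : ℝ) • projC x) x := by
  -- variational inequality
  have hvar : ∀ z, ∀ c ∈ C, ⟪z - projC z, c - projC z⟫_ℝ ≤ 0 := by
    intro z
    haveI : Nonempty C := ⟨⟨hne.some, hne.some_mem⟩⟩
    have hbdd : BddBelow (Set.range fun w : C => ‖z - (w : EuclideanSpace ℝ (Fin d))‖) := by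
      refine ⟨0, ?_⟩
      rintro r ⟨w, rfl⟩
      exact norm_nonneg _
    have hinf : ‖z - projC z‖ = ⨅ w : C, ‖z - w‖ :=
      le_antisymm (le_ciInf fun w => (hprojC z).2 w w.2)
        (ciInf_le hbdd ⟨projC z, (hprojC z).1⟩)
    exact (norm_eq_iInf_iff_real_inner_le_zero hconv (hprojC z).1).mp hinf
  -- orthogonality from cone property
  have horth : ∀ z, ⟪z - projC z, projC z⟫_ℝ = 0 := by
    intro z
    have h2 := hvar z ((2 : ℝ) • projC z) (hcone 2 (by norm_num) _ (hprojC z).1)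
    have hh := hvar z ((1/2 : ℝ) • projC z) (hcone (1/2) (by norm_num) _ (hprojC z).1)
    have e2 : ((2 : ℝ) • projC z) - projC z = projC z := by
      rw [two_smul]; abel
    have eh : ((1/2 : ℝ) • projC z) - projC z = -((1/2 : ℝ) • projC z) := by
      rw [show projC z = ((1:ℝ)) • projC z from (one_smul ℝ _).symm, smul_smul, ← sub_smul,
        ← neg_smul]
      norm_num
    rw [e2] at h2
    rw [eh, inner_neg_right, real_inner_smul_right] at hh
    linarith
  have hle : ∀ z, ∀ c ∈ C, ⟪z - projC z, c⟫_ℝ ≤ 0 := by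
    intro z c hc
    have := hvar z c hc
    rw [inner_sub_right, horth z] at this
    linarith
  rw [hasGradientAt_iff_isLittleO]
  rw [Asymptotics.isLittleO_iff]
  intro ε hε
  rw [Metric.eventually_nhds_iff]
  refine ⟨ε, hε, fun y hy => ?_⟩
  have key := aux_est x y (projC x) (projC y) (horth x) (horth y)
    (hle x (projC y) (hprojC y).1) (hle y (projC x) (hprojC x).1)
  calc ‖‖projC y‖ ^ 2 - ‖projC x‖ ^ 2 - ⟪(2 : ℝ) • projC x, y - x⟫_ℝ‖
      ≤ ‖y - x‖ ^ 2 := by rw [Real.norm_eq_abs]; exact key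
    _ = ‖y - x‖ * ‖y - x‖ := sq (‖y - x‖) ▸ by ring
    _ ≤ ε * ‖y - x‖ := by
        apply mul_le_mul_of_nonneg_right _ (norm_nonneg _)
        rw [dist_eq_norm] at hy; exact le_of_lt hy
end

section
/- Let S be a nonempty compact convex subset of R^d with 0 < b ≤ ‖s‖ ≤ B for all s ∈ S. For fixed u ∈ R^d, the function F_u(τ) := dist²(u, τS) is convex on [0, ∞), and F_u(τ) ≥ (τb − ‖u‖)² for all τ ≥ ‖u‖/b. -/
open MeasureTheory ProbabilityTheory Real
open scoped InnerProductSpace ENNReal NNReal Pointwise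

/-- For a nonempty compact convex set `S` with `0 < b ≤ ‖s‖ ≤ B` on `S`, the map
`τ ↦ dist²(u, τS)` is convex on `[0, ∞)`, and is bounded below by `(τb − ‖u‖)²`
whenever `τ ≥ ‖u‖/b`. -/
theorem dist_sq_dilated_convex (d : ℕ)
    (S : Set (EuclideanSpace ℝ (Fin d))) (hne : S.Nonempty)
    (hconv : Convex ℝ S) (hcomp : IsCompact S)
    (b B : ℝ) (hb : 0 < b)
    (hbB : ∀ s ∈ S, b ≤ ‖s‖ ∧ ‖s‖ ≤ B)
    (u : EuclideanSpace ℝ (Fin d)) :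
    ConvexOn ℝ (Set.Ici 0) (fun τ : ℝ => (Metric.infDist u (τ • S)) ^ 2) ∧
      ∀ τ : ℝ, ‖u‖ / b ≤ τ → (τ * b - ‖u‖) ^ 2 ≤ (Metric.infDist u (τ • S)) ^ 2 := by
  have key : ∀ τ : ℝ, ∃ y ∈ τ • S, Metric.infDist u (τ • S) = dist u y := fun τ =>
    (hcomp.smul τ).exists_infDist_eq_dist (hne.smul_set) u
  constructor
  · refine ⟨convex_Ici 0, ?_⟩
    rintro τ₀ (hτ₀ : (0:ℝ) ≤ τ₀) τ₁ (hτ₁ : (0:ℝ) ≤ τ₁) a c ha hc hac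
    obtain ⟨y₀, hy₀, hd₀⟩ := key τ₀
    obtain ⟨y₁, hy₁, hd₁⟩ := key τ₁
    obtain ⟨s₀, hs₀, rfl⟩ := hy₀
    obtain ⟨s₁, hs₁, rfl⟩ := hy₁
    set τ := a * τ₀ + c * τ₁ with hτdef
    have hτ : 0 ≤ τ := by positivity
    -- the convex combination point lies in τ • S
    have hmem : a • (τ₀ • s₀) + c • (τ₁ • s₁) ∈ τ • S := by
      rcases eq_or_lt_of_le hτ with hτ0 | hτpos
      · have h1 : a * τ₀ = 0 := by
          nlinarith [mul_nonneg ha hτ₀, mul_nonneg hc hτ₁]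
        have h2 : c * τ₁ = 0 := by
          nlinarith [mul_nonneg ha hτ₀, mul_nonneg hc hτ₁]
        rw [← hτ0, Set.zero_smul_set hne]
        simp [smul_smul, h1, h2]
      · have hmem' : (a * τ₀ / τ) • s₀ + (c * τ₁ / τ) • s₁ ∈ S := by
          apply hconv hs₀ hs₁ (by positivity) (by positivity)
          field_simp
          exact hτdef.symm
        refine ⟨_, hmem', ?_⟩
        show τ • ((a * τ₀ / τ) • s₀ + (c * τ₁ / τ) • s₁) = _
        match_scalars <;> field_simp
    have hle : Metric.infDist u (τ • S) ≤ dist u (a • (τ₀ • s₀) + c • (τ₁ • s₁)) :=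
      Metric.infDist_le_dist_of_mem hmem
    have hdist : dist u (a • (τ₀ • s₀) + c • (τ₁ • s₁)) ≤
        a * dist u (τ₀ • s₀) + c * dist u (τ₁ • s₁) := by
      have : u - (a • (τ₀ • s₀) + c • (τ₁ • s₁))
          = a • (u - τ₀ • s₀) + c • (u - τ₁ • s₁) := by
        match_scalars <;> linarith
      rw [dist_eq_norm, dist_eq_norm, dist_eq_norm, this]
      calc ‖a • (u - τ₀ • s₀) + c • (u - τ₁ • s₁)‖
          ≤ ‖a • (u - τ₀ • s₀)‖ + ‖c • (u - τ₁ • s₁)‖ := norm_add_le _ _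
        _ = a * ‖u - τ₀ • s₀‖ + c * ‖u - τ₁ • s₁‖ := by
            rw [norm_smul, norm_smul, Real.norm_of_nonneg ha, Real.norm_of_nonneg hc]
    have hnn : 0 ≤ Metric.infDist u (τ • S) := Metric.infDist_nonneg
    have hnn0 : 0 ≤ dist u (τ₀ • s₀) := dist_nonneg
    have hnn1 : 0 ≤ dist u (τ₁ • s₁) := dist_nonneg
    simp only [hd₀, hd₁]
    calc Metric.infDist u (τ • S) ^ 2
        ≤ (a * dist u (τ₀ • s₀) + c * dist u (τ₁ • s₁)) ^ 2 := by
          apply pow_le_pow_left₀ hnn (le_trans hle hdist)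
      _ ≤ a * dist u (τ₀ • s₀) ^ 2 + c * dist u (τ₁ • s₁) ^ 2 := by
          nlinarith [sq_nonneg (dist u (τ₀ • s₀) - dist u (τ₁ • s₁)), mul_nonneg ha hc]
  · intro τ hτ
    have hτ0 : 0 ≤ τ := le_trans (by positivity) hτ
    have hub : ‖u‖ ≤ τ * b := by
      rw [div_le_iff₀ hb] at hτ; linarith
    obtain ⟨y, hy, hd⟩ := key τ
    obtain ⟨s, hs, rfl⟩ := hy
    have hsb : b ≤ ‖s‖ := (hbB s hs).1
    have h1 : τ * b - ‖u‖ ≤ dist u (τ • s) := by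
      have : ‖τ • s‖ - ‖u‖ ≤ ‖u - τ • s‖ := by
        have := norm_sub_norm_le (τ • s) u
        rw [norm_sub_rev] at this
        linarith [abs_le.mp (abs_norm_sub_norm_le (τ • s) u)]
      rw [dist_eq_norm]
      have hns : ‖τ • s‖ = τ * ‖s‖ := by
        rw [norm_smul, Real.norm_of_nonneg hτ0]
      nlinarith
    rw [hd]
    apply pow_le_pow_left₀ (by linarith) h1
end

section
/- Let S be a nonempty compact convex subset of R^d not containing the origin, with ‖s‖ ≤ B for all s ∈ S. For fixed τ ≥ 0, the map u ↦ ⟨u − π_{τS}(u), π_{τS}(u)⟩ is Lipschitz with constant τB, where π_{τS} is the Euclidean projection onto τS. -/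
open MeasureTheory ProbabilityTheory Real
open scoped InnerProductSpace ENNReal NNReal Pointwise

/-- For a nonempty compact convex set `S` not containing the origin, with
`‖s‖ ≤ B` on `S`, and `τ ≥ 0`, the map `u ↦ ⟨u − π_{τS}(u), π_{τS}(u)⟩` is
Lipschitz with constant `τB`. -/
theorem inner_residual_proj_lipschitz (d : ℕ)
    (S : Set (EuclideanSpace ℝ (Fin d))) (hne : S.Nonempty)
    (hconv : Convex ℝ S) (hcomp : IsCompact S)
    (h0 : (0 : EuclideanSpace ℝ (Fin d)) ∉ S)
    (B : ℝ) (hB : ∀ s ∈ S, ‖s‖ ≤ B)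
    (τ : ℝ) (hτ : 0 ≤ τ)
    (projS : EuclideanSpace ℝ (Fin d) → EuclideanSpace ℝ (Fin d))
    (hprojS : ∀ x, projS x ∈ τ • S ∧ ∀ y ∈ τ • S, ‖x - projS x‖ ≤ ‖x - y‖) :
    ∀ u y : EuclideanSpace ℝ (Fin d),
      |⟪u - projS u, projS u⟫_ℝ - ⟪y - projS y, projS y⟫_ℝ| ≤ τ * B * ‖u - y‖ := by
  have hconv' : Convex ℝ (τ • S) := hconv.smul τ
  have hvar : ∀ x, ∀ w ∈ τ • S, ⟪x - projS x, w - projS x⟫_ℝ ≤ 0 := by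
    intro x
    have hmem := (hprojS x).1
    haveI : Nonempty ↑(τ • S) := Set.Nonempty.to_subtype (hne.smul_set)
    have heq : ‖x - projS x‖ = ⨅ w : ↥(τ • S), ‖x - w‖ := by
      have hbdd : BddBelow (Set.range fun w : ↑(τ • S) => ‖x - (w : EuclideanSpace ℝ (Fin d))‖) := by
        refine ⟨0, ?_⟩
        rintro r ⟨w, rfl⟩
        exact norm_nonneg _
      apply le_antisymm
      · exact le_ciInf fun w => (hprojS x).2 w w.2
      · exact ciInf_le hbdd ⟨projS x, hmem⟩
    exact (norm_eq_iInf_iff_real_inner_le_zero hconv' hmem).mp heq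
  have hBnorm : ∀ x, ‖projS x‖ ≤ τ * B := by
    intro x
    obtain ⟨s, hs, hsm⟩ := (hprojS x).1
    rw [← hsm, norm_smul, Real.norm_eq_abs, abs_of_nonneg hτ]
    exact mul_le_mul_of_nonneg_left (hB s hs) hτ
  intro u y
  set a := projS u with ha
  set b := projS y with hb
  have h1 : ⟪u - a, b - a⟫_ℝ ≤ 0 := hvar u b (hprojS y).1
  have h2 : ⟪y - b, a - b⟫_ℝ ≤ 0 := hvar y a (hprojS u).1
  have hfirm : ‖a - b‖ ^ 2 ≤ ⟪u - y, a - b⟫_ℝ := by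
    have e : ⟪u - y, a - b⟫_ℝ - ‖a - b‖ ^ 2 = -⟪u - a, b - a⟫_ℝ - ⟪y - b, a - b⟫_ℝ := by
      rw [show ‖a - b‖ ^ 2 = ‖a‖ ^ 2 - 2 * ⟪a, b⟫_ℝ + ‖b‖ ^ 2 from norm_sub_sq_real a b]
      simp only [inner_sub_left, inner_sub_right, real_inner_self_eq_norm_sq]
      rw [real_inner_comm b a]
      ring
    linarith
  have hkey : ‖(u - y) - (a - b)‖ ≤ ‖u - y‖ := by
    have hsq : ‖(u - y) - (a - b)‖ ^ 2 ≤ ‖u - y‖ ^ 2 := by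
      have expand : ‖(u - y) - (a - b)‖ ^ 2
          = ‖u - y‖ ^ 2 - 2 * ⟪u - y, a - b⟫_ℝ + ‖a - b‖ ^ 2 :=
        norm_sub_sq_real (u - y) (a - b)
      nlinarith [sq_nonneg ‖a - b‖]
    calc ‖(u - y) - (a - b)‖ = Real.sqrt (‖(u - y) - (a - b)‖ ^ 2) :=
          (Real.sqrt_sq (norm_nonneg _)).symm
      _ ≤ Real.sqrt (‖u - y‖ ^ 2) := Real.sqrt_le_sqrt hsq
      _ = ‖u - y‖ := Real.sqrt_sq (norm_nonneg _)
  have hmul : ∀ c : EuclideanSpace ℝ (Fin d), ‖c‖ ≤ τ * B →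
      ‖(u - y) - (a - b)‖ * ‖c‖ ≤ τ * B * ‖u - y‖ := by
    intro c hc
    calc ‖(u - y) - (a - b)‖ * ‖c‖ ≤ ‖u - y‖ * (τ * B) :=
          mul_le_mul hkey hc (norm_nonneg _) (norm_nonneg _)
      _ = τ * B * ‖u - y‖ := by ring
  rw [abs_le]
  constructor
  · have s1 : ⟪u - a, b⟫_ℝ ≤ ⟪u - a, a⟫_ℝ := by
      have := h1; rw [inner_sub_right] at this; linarith
    have s2 : ⟪u - a, b⟫_ℝ - ⟪y - b, b⟫_ℝ = ⟪(u - y) - (a - b), b⟫_ℝ := by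
      simp only [inner_sub_left]; ring
    have s3 : -(‖(u - y) - (a - b)‖ * ‖b‖) ≤ ⟪(u - y) - (a - b), b⟫_ℝ := by
      have hab := abs_real_inner_le_norm ((u - y) - (a - b)) b
      have hna := neg_abs_le ⟪(u - y) - (a - b), b⟫_ℝ
      linarith
    have s4 := hmul b (hBnorm y)
    linarith
  · have s1 : ⟪y - b, a⟫_ℝ ≤ ⟪y - b, b⟫_ℝ := by
      have := h2; rw [inner_sub_right] at this; linarith
    have s2 : ⟪u - a, a⟫_ℝ - ⟪y - b, a⟫_ℝ = ⟪(u - y) - (a - b), a⟫_ℝ := by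
      simp only [inner_sub_left]; ring
    have s3 : ⟪(u - y) - (a - b), a⟫_ℝ ≤ ‖(u - y) - (a - b)‖ * ‖a‖ :=
      real_inner_le_norm _ _
    have s4 := hmul a (hBnorm u)
    linarith
end

section
/- Let f be a proper convex function on R^d and x a point at which the subdifferential ∂f(x) is nonempty, compact, and does not contain the origin. Then the statistical dimension of the descent cone satisfies δ(D(f,x)) ≤ inf_{τ≥0} E[dist²(g, τ·∂f(x))], where g is a standard Gaussian vector. -/
open MeasureTheory ProbabilityTheory Real
open scoped InnerProductSpace ENNReal NNReal Pointwise

/-- The polar cone of a set `C ⊆ ℝ^d`. -/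
def polarCone {d : ℕ} (C : Set (EuclideanSpace ℝ (Fin d))) : Set (EuclideanSpace ℝ (Fin d)) :=
  {u | ∀ x ∈ C, ⟪u, x⟫_ℝ ≤ 0}

/-- The subdifferential of `f` at `x`. -/
def subdiff {d : ℕ} (f : EuclideanSpace ℝ (Fin d) → ℝ) (x : EuclideanSpace ℝ (Fin d)) :
    Set (EuclideanSpace ℝ (Fin d)) :=
  {u | ∀ y, f x + ⟪u, y - x⟫_ℝ ≤ f y}

/-- The descent cone of `f` at `x`. -/
def descentCone {d : ℕ} (f : EuclideanSpace ℝ (Fin d) → ℝ) (x : EuclideanSpace ℝ (Fin d)) :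
    Set (EuclideanSpace ℝ (Fin d)) :=
  ⋃ τ ∈ Set.Ioi (0 : ℝ), {y | f (x + τ • y) ≤ f x}


lemma integrable_sq_gaussian : Integrable (fun t : ℝ => t ^ 2) (gaussianReal 0 1) := by
  rw [gaussianReal_of_var_ne_zero 0 one_ne_zero,
    integrable_withDensity_iff (measurable_gaussianPDF 0 1)
      (ae_of_all _ fun x => ENNReal.ofReal_lt_top)]
  have key : Integrable (fun x : ℝ => x ^ 2 * Real.exp (-(1/2 : ℝ) * x ^ 2)) := by
    have h := integrable_rpow_mul_exp_neg_mul_sq (b := 1/2) (by norm_num) (s := 2) (by norm_num)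
    have : ∀ x : ℝ, x ^ (2:ℝ) = x ^ 2 := fun x => by
      rw [show ((2:ℝ) = ((2:ℕ):ℝ)) by norm_num, Real.rpow_natCast]
    simpa [this] using h
  have h2 := key.const_mul ((Real.sqrt (2 * π * 1))⁻¹)
  refine h2.congr (ae_of_all _ fun x => ?_)
  simp only [gaussianPDF]
  rw [ENNReal.toReal_ofReal (gaussianPDFReal_nonneg _ _ _)]
  simp only [gaussianPDFReal, NNReal.coe_one]
  rw [show (-(x - 0) ^ 2 / (2 * (1:ℝ))) = -(1/2 : ℝ) * x ^ 2 by ring]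
  ring

lemma map_eval_pi {ι : Type*} [Fintype ι] [DecidableEq ι] {α : ι → Type*}
    [∀ i, MeasurableSpace (α i)]
    (μ : ∀ i, Measure (α i)) [∀ i, IsProbabilityMeasure (μ i)] (i : ι) :
    (Measure.pi μ).map (Function.eval i) = μ i := by
  ext s hs
  rw [Measure.map_apply (measurable_pi_apply i) hs]
  have hpre : Function.eval i ⁻¹' s
      = Set.pi Set.univ (Function.update (fun _ => Set.univ) i s) := by
    ext y
    simp only [Set.mem_preimage, Set.mem_pi, Set.mem_univ, forall_true_left, Function.eval]
    constructor
    · intro hy j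
      rcases eq_or_ne j i with rfl | hj
      · simpa using hy
      · simp [Function.update_of_ne hj]
    · intro hy
      simpa using hy i
  rw [hpre, Measure.pi_pi]
  rw [Finset.prod_eq_single i (fun j _ hj => by simp [Function.update_of_ne hj])
    (fun h => absurd (Finset.mem_univ i) h)]
  simp

lemma integrable_eval_sq (d : ℕ) (i : Fin d) :
    Integrable (fun y : Fin d → ℝ => (y i) ^ 2)
      (Measure.pi fun _ : Fin d => gaussianReal 0 1) := by
  have h := integrable_sq_gaussian
  rw [← map_eval_pi (fun _ : Fin d => gaussianReal 0 1) i] at h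
  exact (integrable_map_measure ((measurable_id.pow_const 2).aestronglyMeasurable)
    (measurable_pi_apply i).aemeasurable).mp h

lemma integrable_normSq_stdGaussian (d : ℕ) :
    Integrable (fun g : EuclideanSpace ℝ (Fin d) => ‖g‖ ^ 2) (stdGaussian d) := by
  rw [_root_.stdGaussian, integrable_map_equiv]
  have : ((fun g : EuclideanSpace ℝ (Fin d) => ‖g‖ ^ 2)
      ∘ (MeasurableEquiv.toLp 2 (Fin d → ℝ)))
      = fun y : Fin d → ℝ => ∑ i, (y i) ^ 2 := by
    funext y
    simp only [Function.comp_apply, EuclideanSpace.norm_eq]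
    rw [Real.sq_sqrt (by positivity)]
    congr 1
    ext i
    simp [MeasurableEquiv.coe_toLp]
  rw [this]
  exact integrable_finset_sum _ fun i _ => integrable_eval_sq d i

instance (d : ℕ) : IsProbabilityMeasure (stdGaussian d) := by
  rw [_root_.stdGaussian]
  exact Measure.isProbabilityMeasure_map
    (MeasurableEquiv.toLp 2 (Fin d → ℝ)).measurable.aemeasurable

lemma smul_subdiff_subset_polar {d : ℕ} (f : EuclideanSpace ℝ (Fin d) → ℝ)
    (x : EuclideanSpace ℝ (Fin d)) (τ : ℝ) (hτ : 0 ≤ τ) :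
    τ • subdiff f x ⊆ polarCone (descentCone f x) := by
  rintro v hv y hy
  obtain ⟨u, hu, rfl⟩ := hv
  obtain ⟨σ, hσ, hfy⟩ : ∃ σ ∈ Set.Ioi (0:ℝ), f (x + σ • y) ≤ f x := by
    simpa [descentCone] using hy
  have h1 := hu (x + σ • y)
  have h2 : ⟪u, σ • y⟫_ℝ ≤ 0 := by
    have : ⟪u, (x + σ • y) - x⟫_ℝ = ⟪u, σ • y⟫_ℝ := by
      congr 1; abel
    linarith [this ▸ h1, hfy]
  have h3 : ⟪u, y⟫_ℝ ≤ 0 := by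
    rw [real_inner_smul_right] at h2
    exact nonpos_of_mul_nonpos_right h2 hσ
  rw [real_inner_smul_left]
  exact mul_nonpos_of_nonneg_of_nonpos hτ h3

/-- The statistical dimension of the descent cone, `δ(D(f,x)) = E[dist²(g, D(f,x)°)]`,
is bounded by `E[dist²(g, τ ∂f(x))]` for every `τ ≥ 0`. -/
theorem statdim_descent_cone_le (d : ℕ)
    (f : EuclideanSpace ℝ (Fin d) → ℝ) (hf : ConvexOn ℝ Set.univ f)
    (x : EuclideanSpace ℝ (Fin d))
    (hne : (subdiff f x).Nonempty) (hcomp : IsCompact (subdiff f x))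
    (h0 : (0 : EuclideanSpace ℝ (Fin d)) ∉ subdiff f x) :
    ∀ τ : ℝ, 0 ≤ τ →
      ∫ g, (Metric.infDist g (polarCone (descentCone f x))) ^ 2 ∂(stdGaussian d)
        ≤ ∫ g, (Metric.infDist g (τ • subdiff f x)) ^ 2 ∂(stdGaussian d) := by
  intro τ hτ
  set S : Set (EuclideanSpace ℝ (Fin d)) := τ • subdiff f x with hS
  have hSne : S.Nonempty := hne.smul_set
  obtain ⟨s₀, hs₀⟩ := hSne
  have hsub : S ⊆ polarCone (descentCone f x) := smul_subdiff_subset_polar f x τ hτ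
  have hpt : ∀ g : EuclideanSpace ℝ (Fin d),
      (Metric.infDist g (polarCone (descentCone f x))) ^ 2
        ≤ (Metric.infDist g S) ^ 2 := fun g => by
    have := Metric.infDist_le_infDist_of_subset hsub ⟨s₀, hs₀⟩ (x := g)
    exact pow_le_pow_left₀ Metric.infDist_nonneg this 2
  have hint : Integrable (fun g => (Metric.infDist g S) ^ 2) (stdGaussian d) := by
    have hbound : Integrable (fun g : EuclideanSpace ℝ (Fin d) =>
        2 * ‖g‖ ^ 2 + 2 * ‖s₀‖ ^ 2) (stdGaussian d) :=
      ((integrable_normSq_stdGaussian d).const_mul 2).add (integrable_const _)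
    refine hbound.mono' ?_ (ae_of_all _ fun g => ?_)
    · exact ((Metric.continuous_infDist_pt S).pow 2).aestronglyMeasurable
    · have h1 : Metric.infDist g S ≤ ‖g‖ + ‖s₀‖ := by
        calc Metric.infDist g S ≤ dist g s₀ := Metric.infDist_le_dist_of_mem hs₀
        _ ≤ ‖g‖ + ‖s₀‖ := by rw [dist_eq_norm]; exact (norm_sub_le _ _)
      have h2 : (0:ℝ) ≤ Metric.infDist g S := Metric.infDist_nonneg
      rw [Real.norm_eq_abs, abs_of_nonneg (by positivity)]
      nlinarith [h1, h2, sq_nonneg (‖g‖ - ‖s₀‖), norm_nonneg g, norm_nonneg s₀]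
  exact integral_mono_of_nonneg (ae_of_all _ fun g => by positivity) hint (ae_of_all _ hpt)
end

section
/- Let x ∈ R^d have its first s entries nonzero (s ≥ 1) and the rest zero. For the ℓ₁ norm, the expected squared distance from a standard Gaussian vector g to the dilated subdifferential τ·∂‖x‖₁ equals s(1 + τ²) + (d − s)·√(2/π)·∫_τ^∞ (u − τ)² e^{−u²/2} du, for every τ ≥ 0. -/
open MeasureTheory ProbabilityTheory Real
open scoped InnerProductSpace ENNReal NNReal Pointwise

section Aux
open Set Filter

lemma exp_sq_int : Integrable (fun t : ℝ => Real.exp (-t ^ 2 / 2)) := by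
  have h : ∀ t : ℝ, -t ^ 2 / 2 = -(1/2 : ℝ) * t ^ 2 := fun t => by ring
  simp_rw [h]
  exact integrable_exp_neg_mul_sq (by norm_num)

lemma mul_exp_int : Integrable (fun t : ℝ => t * Real.exp (-t ^ 2 / 2)) := by
  have h : ∀ t : ℝ, -t ^ 2 / 2 = -(1/2 : ℝ) * t ^ 2 := fun t => by ring
  simp_rw [h]
  exact integrable_mul_exp_neg_mul_sq (by norm_num)

lemma sq_exp_int : Integrable (fun t : ℝ => t ^ 2 * Real.exp (-t ^ 2 / 2)) := by
  have := integrable_rpow_mul_exp_neg_mul_sq (b := (1:ℝ)/2) (by norm_num) (s := 2) (by norm_num)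
  have h : (fun t : ℝ => t ^ (2:ℝ) * Real.exp (-(1/2 : ℝ) * t ^ 2))
      = fun t => t ^ 2 * Real.exp (-t ^ 2 / 2) := by
    funext t
    have h2 : t ^ (2:ℝ) = t ^ (2:ℕ) := by
      rw [← Real.rpow_natCast t 2]; norm_num
    rw [h2, show -(1/2 : ℝ) * t ^ 2 = -t ^ 2 / 2 by ring]
  rwa [h] at this

lemma integral_exp_sq : ∫ t : ℝ, Real.exp (-t ^ 2 / 2) = Real.sqrt (2 * π) := by
  have h : ∀ t : ℝ, -t ^ 2 / 2 = -(1/2 : ℝ) * t ^ 2 := fun t => by ring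
  simp_rw [h, integral_gaussian]
  norm_num
  ring

lemma integral_mul_exp_sq : ∫ t : ℝ, t * Real.exp (-t ^ 2 / 2) = 0 := by
  set f : ℝ → ℝ := fun t => t * Real.exp (-t ^ 2 / 2) with hf
  have hIic : ∫ t in Iic (0:ℝ), f t = - ∫ t in Ioi (0:ℝ), f t := by
    have : ∫ t in Iic (0:ℝ), f t = ∫ t in Iic (0:ℝ), -f (-t) := by
      apply setIntegral_congr_fun measurableSet_Iic
      intro t _
      simp only [hf]
      ring_nf
    rw [this, integral_neg, integral_comp_neg_Iic, neg_zero]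
  have hsplit : (∫ t in Iic (0:ℝ), f t) + ∫ t in Ioi (0:ℝ), f t = ∫ t, f t := by
    rw [← setIntegral_union (Iic_disjoint_Ioi le_rfl) measurableSet_Ioi
      mul_exp_int.integrableOn mul_exp_int.integrableOn, Iic_union_Ioi,
      Measure.restrict_univ]
  rw [← hsplit, hIic]
  ring

lemma tendsto_mul_exp : Tendsto (fun t : ℝ => t * Real.exp (-t ^ 2 / 2)) atTop (nhds 0) := by
  apply squeeze_zero_norm (a := fun t : ℝ => |t| ^ (1:ℝ) * Real.exp (-(1/2 : ℝ) * t ^ 2))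
  · intro t
    rw [Real.rpow_one, norm_mul, Real.norm_eq_abs, Real.norm_eq_abs,
      abs_of_pos (Real.exp_pos _), show -(1/2 : ℝ) * t ^ 2 = -t ^ 2 / 2 by ring]
  · have := tendsto_rpow_abs_mul_exp_neg_mul_sq_cocompact (by norm_num : (0:ℝ) < 1/2) 1
    rw [cocompact_eq_atBot_atTop] at this
    exact this.mono_left le_sup_right

lemma integral_Ioi_sq_exp :
    ∫ t in Ioi (0:ℝ), t ^ 2 * Real.exp (-t ^ 2 / 2) = Real.sqrt (2 * π) / 2 := by
  have hderiv : ∀ t : ℝ,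
      HasDerivAt (fun y : ℝ => -(y * Real.exp (-y ^ 2 / 2)))
        ((t ^ 2 - 1) * Real.exp (-t ^ 2 / 2)) t := by
    intro t
    have h1 : HasDerivAt (fun y : ℝ => -y ^ 2 / 2) (-t) t := by
      have := (hasDerivAt_pow 2 t).neg.div_const 2
      refine this.congr_deriv ?_
      simp
      ring
    have h2 := (Real.hasDerivAt_exp (-t ^ 2 / 2)).comp t h1
    have h3 := ((hasDerivAt_id t).mul h2).neg
    refine h3.congr_deriv ?_
    simp only [Function.comp_def, id_eq]
    ring
  have hcont : Continuous (fun y : ℝ => -(y * Real.exp (-y ^ 2 / 2))) := by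
    fun_prop
  have hint : IntegrableOn (fun t : ℝ => (t ^ 2 - 1) * Real.exp (-t ^ 2 / 2)) (Ioi 0) := by
    have : (fun t : ℝ => (t ^ 2 - 1) * Real.exp (-t ^ 2 / 2))
        = fun t => t ^ 2 * Real.exp (-t ^ 2 / 2) - Real.exp (-t ^ 2 / 2) := by
      funext t; ring
    rw [this]
    exact (sq_exp_int.sub exp_sq_int).integrableOn
  have htend : Tendsto (fun y : ℝ => -(y * Real.exp (-y ^ 2 / 2))) atTop (nhds 0) := by
    simpa using tendsto_mul_exp.neg
  have hFTC := integral_Ioi_of_hasDerivAt_of_tendsto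
    hcont.continuousWithinAt (fun t _ => hderiv t) hint htend
  norm_num at hFTC
  have hsub : ∫ t in Ioi (0:ℝ), (t ^ 2 - 1) * Real.exp (-t ^ 2 / 2)
      = (∫ t in Ioi (0:ℝ), t ^ 2 * Real.exp (-t ^ 2 / 2))
        - ∫ t in Ioi (0:ℝ), Real.exp (-t ^ 2 / 2) := by
    rw [← integral_sub sq_exp_int.integrableOn exp_sq_int.integrableOn]
    congr 1
    funext t
    ring
  have hgauss : ∫ t in Ioi (0:ℝ), Real.exp (-t ^ 2 / 2) = Real.sqrt (2 * π) / 2 := by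
    have h : ∀ t : ℝ, -t ^ 2 / 2 = -(1/2 : ℝ) * t ^ 2 := fun t => by ring
    simp_rw [h, integral_gaussian_Ioi]
    norm_num
    ring
  rw [hsub, hgauss] at hFTC
  linarith

lemma integral_sq_exp : ∫ t : ℝ, t ^ 2 * Real.exp (-t ^ 2 / 2) = Real.sqrt (2 * π) := by
  have h := integral_comp_abs (f := fun u : ℝ => u ^ 2 * Real.exp (-u ^ 2 / 2))
  simp only [sq_abs] at h
  rw [h, integral_Ioi_sq_exp]
  ring



lemma integral_max_sq {τ : ℝ} (hτ : 0 ≤ τ) :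
    ∫ t : ℝ, (max (|t| - τ) 0) ^ 2 * Real.exp (-t ^ 2 / 2)
      = 2 * ∫ u in Ioi τ, (u - τ) ^ 2 * Real.exp (-u ^ 2 / 2) := by
  have hg : Integrable (fun u : ℝ => (max (u - τ) 0) ^ 2 * Real.exp (-u ^ 2 / 2)) := by
    apply sq_exp_int.mono'
    · apply Continuous.aestronglyMeasurable
      fun_prop
    · filter_upwards with u
      rw [Real.norm_eq_abs, abs_mul, abs_of_pos (Real.exp_pos _), abs_of_nonneg (by positivity)]
      have h1 : max (u - τ) 0 ≤ |u| := by
        rcases le_total (u - τ) 0 with h | h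
        · simp [max_eq_right h, abs_nonneg]
        · calc max (u - τ) 0 = u - τ := max_eq_left h
            _ ≤ u := by linarith
            _ ≤ |u| := le_abs_self u
      have h2 : (max (u - τ) 0) ^ 2 ≤ u ^ 2 := by
        rw [← sq_abs u]
        exact pow_le_pow_left₀ (le_max_right _ _) h1 2
      exact mul_le_mul_of_nonneg_right h2 (Real.exp_pos _).le
  have h := integral_comp_abs (f := fun u : ℝ => (max (u - τ) 0) ^ 2 * Real.exp (-u ^ 2 / 2))
  simp only [sq_abs] at h
  rw [h]
  congr 1
  rw [← Ioc_union_Ioi_eq_Ioi hτ,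
    setIntegral_union (Ioc_disjoint_Ioi le_rfl) measurableSet_Ioi hg.integrableOn hg.integrableOn]
  have hzero : ∫ u in Ioc (0:ℝ) τ, (max (u - τ) 0) ^ 2 * Real.exp (-u ^ 2 / 2) = 0 := by
    rw [setIntegral_congr_fun measurableSet_Ioc
      (g := fun _ => (0:ℝ)) (fun u hu => by
        rw [max_eq_right (by linarith [hu.2] : u - τ ≤ 0)]
        ring)]
    simp
  rw [hzero, zero_add]
  apply setIntegral_congr_fun measurableSet_Ioi
  intro u hu
  have := mem_Ioi.mp hu
  simp [max_eq_left (by linarith : (0:ℝ) ≤ u - τ)]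

lemma integral_gaussianReal_eq (f : ℝ → ℝ) :
    ∫ t, f t ∂(gaussianReal 0 1)
      = (Real.sqrt (2 * π))⁻¹ * ∫ t, f t * Real.exp (-t ^ 2 / 2) := by
  rw [gaussianReal_of_var_ne_zero 0 one_ne_zero]
  have hpdf : ∀ t : ℝ, gaussianPDFReal 0 1 t = (Real.sqrt (2 * π))⁻¹ * Real.exp (-t ^ 2 / 2) := by
    intro t; simp [gaussianPDFReal]
  have hd : (gaussianPDF 0 1) = fun t => ((Real.toNNReal (gaussianPDFReal 0 1 t) : ℝ≥0) : ℝ≥0∞) := by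
    funext t; rfl
  rw [hd, integral_withDensity_eq_integral_smul
    ((measurable_gaussianPDFReal 0 1).real_toNNReal)]
  rw [← integral_const_mul]
  congr 1
  funext t
  rw [NNReal.smul_def, smul_eq_mul, Real.coe_toNNReal _ (gaussianPDFReal_nonneg 0 1 t), hpdf t]
  ring

lemma sqrt_ne : Real.sqrt (2 * π) ≠ 0 := by
  positivity

lemma gauss_shift (c : ℝ) : ∫ t, (t - c) ^ 2 ∂(gaussianReal 0 1) = 1 + c ^ 2 := by
  rw [integral_gaussianReal_eq]
  have hexpand : (fun t : ℝ => (t - c) ^ 2 * Real.exp (-t ^ 2 / 2))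
      = fun t => t ^ 2 * Real.exp (-t ^ 2 / 2)
          - (2 * c) * (t * Real.exp (-t ^ 2 / 2)) + c ^ 2 * Real.exp (-t ^ 2 / 2) := by
    funext t; ring
  rw [hexpand, integral_add (by exact (sq_exp_int.sub (mul_exp_int.const_mul _)))
      (exp_sq_int.const_mul _),
    integral_sub sq_exp_int (mul_exp_int.const_mul _), integral_const_mul, integral_const_mul,
    integral_sq_exp, integral_mul_exp_sq, integral_exp_sq]
  field_simp
  ring

lemma gauss_max {τ : ℝ} (hτ : 0 ≤ τ) :
    ∫ t, (max (|t| - τ) 0) ^ 2 ∂(gaussianReal 0 1)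
      = Real.sqrt (2 / π) * ∫ u in Ioi τ, (u - τ) ^ 2 * Real.exp (-u ^ 2 / 2) := by
  rw [integral_gaussianReal_eq, integral_max_sq hτ]
  have hs : Real.sqrt (2 / π) = 2 / Real.sqrt (2 * π) := by
    rw [show (2:ℝ) / π = 4 / (2 * π) by
        field_simp
        ring,
      Real.sqrt_div (by norm_num) (2 * π),
      show Real.sqrt (4:ℝ) = 2 by
        rw [show (4:ℝ) = 2 ^ 2 by norm_num, Real.sqrt_sq (by norm_num)]]
  rw [hs]
  field_simp

lemma gauss_integrable (F : ℝ → ℝ) (hF : Continuous F) (a b : ℝ)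
    (hbound : ∀ t, |F t| ≤ a * t ^ 2 + b) :
    Integrable F (gaussianReal 0 1) := by
  rw [gaussianReal_of_var_ne_zero 0 one_ne_zero,
    integrable_withDensity_iff (measurable_gaussianPDF 0 1)
      (ae_of_all _ fun t => ENNReal.ofReal_lt_top)]
  have hpdf : ∀ t : ℝ, (gaussianPDF 0 1 t).toReal
      = (Real.sqrt (2 * π))⁻¹ * Real.exp (-t ^ 2 / 2) := by
    intro t
    rw [gaussianPDF_def, ENNReal.toReal_ofReal (gaussianPDFReal_nonneg 0 1 t)]
    simp [gaussianPDFReal]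
  apply Integrable.mono'
    (g := fun t => (Real.sqrt (2 * π))⁻¹ * (a * (t ^ 2 * Real.exp (-t ^ 2 / 2)) + b * Real.exp (-t ^ 2 / 2)))
    (((sq_exp_int.const_mul a).add (exp_sq_int.const_mul b)).const_mul _)
  · apply Continuous.aestronglyMeasurable
    have : Continuous (fun t : ℝ => (gaussianPDF 0 1 t).toReal) := by
      simp only [hpdf]
      fun_prop
    exact hF.mul this
  · filter_upwards with t
    rw [norm_mul, hpdf t, Real.norm_eq_abs, Real.norm_eq_abs,
      abs_of_nonneg (by positivity : (0:ℝ) ≤ (Real.sqrt (2 * π))⁻¹ * Real.exp (-t ^ 2 / 2))]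
    have h1 : |F t| * ((Real.sqrt (2 * π))⁻¹ * Real.exp (-t ^ 2 / 2))
        ≤ (a * t ^ 2 + b) * ((Real.sqrt (2 * π))⁻¹ * Real.exp (-t ^ 2 / 2)) :=
      mul_le_mul_of_nonneg_right (hbound t) (by positivity)
    calc |F t| * ((Real.sqrt (2 * π))⁻¹ * Real.exp (-t ^ 2 / 2))
        ≤ (a * t ^ 2 + b) * ((Real.sqrt (2 * π))⁻¹ * Real.exp (-t ^ 2 / 2)) := h1
      _ = (Real.sqrt (2 * π))⁻¹ * (a * (t ^ 2 * Real.exp (-t ^ 2 / 2)) + b * Real.exp (-t ^ 2 / 2)) := by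
          ring

noncomputable def sgn' (r : ℝ) : ℝ := if 0 ≤ r then 1 else -1

lemma sgn'_mul_self (r : ℝ) : sgn' r * r = |r| := by
  unfold sgn'
  split_ifs with h
  · rw [abs_of_nonneg h]; ring
  · rw [abs_of_neg (lt_of_not_ge h)]; ring

lemma abs_sgn' (r : ℝ) : |sgn' r| = 1 := by
  unfold sgn'; split_ifs <;> norm_num

lemma sq_sgn' (r : ℝ) : sgn' r ^ 2 = 1 := by
  unfold sgn'; split_ifs <;> norm_num

lemma inner_euclid {d : ℕ} (u v : EuclideanSpace ℝ (Fin d)) : ⟪u, v⟫_ℝ = ∑ j, u j * v j := by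
  rw [PiLp.inner_apply]
  simp [RCLike.inner_apply]
  exact Finset.sum_congr rfl fun _ _ => mul_comm _ _

lemma subgrad_coord {d : ℕ} {x u : EuclideanSpace ℝ (Fin d)}
    (hu : u ∈ subdiff (fun y => ∑ i, |y i|) x) (i : Fin d) (t : ℝ) :
    |x i| + u i * (t - x i) ≤ |t| := by
  set y : EuclideanSpace ℝ (Fin d) := WithLp.toLp 2 (Function.update x i t) with hy
  have h := hu y
  rw [inner_euclid] at h
  have happ : ∀ j, y j = Function.update x i t j := fun j => rfl
  have hyi : (y - x) i = t - x i := by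
    have h1 : (y - x) i = y i - x i := rfl
    rw [h1, happ]
    simp
  have hinner : ∑ j, u j * ((y - x) j) = u i * (t - x i) := by
    rw [← hyi]
    apply Finset.sum_eq_single i
    · intro j _ hj
      have h1 : (y - x) j = y j - x j := rfl
      rw [h1, happ, Function.update_apply]
      simp [hj]
    · simp
  rw [hinner] at h
  have hsumupd : ∑ j, |y j| = |t| + ∑ j ∈ Finset.univ \ {i}, |x j| := by
    have hh : ∀ j, |y j| = Function.update (fun j => |x j|) i |t| j := by
      intro j
      rw [happ]
      rcases eq_or_ne j i with rfl | hj
      · simp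
      · simp [Function.update_apply, hj]
    simp_rw [hh]
    exact Finset.sum_update_of_mem (Finset.mem_univ i) _ _
  have hsumx : ∑ j, |x j| = |x i| + ∑ j ∈ Finset.univ \ {i}, |x j| := by
    rw [Finset.sdiff_singleton_eq_erase]
    exact (Finset.add_sum_erase _ _ (Finset.mem_univ i)).symm
  have h' : (∑ j, |x j|) + u i * (t - x i) ≤ ∑ j, |y j| := h
  rw [hsumupd, hsumx] at h'
  linarith

lemma subdiff_l1 {d s : ℕ} (x : EuclideanSpace ℝ (Fin d))
    (hsupp : ∀ i : Fin d, ((i : ℕ) < s → x i ≠ 0) ∧ (s ≤ (i : ℕ) → x i = 0)) :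
    subdiff (fun y => ∑ i, |y i|) x
      = {u : EuclideanSpace ℝ (Fin d) |
          ∀ i : Fin d, ((i : ℕ) < s → u i = sgn' (x i)) ∧ (s ≤ (i : ℕ) → |u i| ≤ 1)} := by
  ext u
  constructor
  · intro hu
    intro i
    constructor
    · intro his
      have hx := (hsupp i).1 his
      have h1 := subgrad_coord hu i (2 * x i)
      have h2 := subgrad_coord hu i 0
      have h2' : u i * x i ≥ |x i| := by
        simp at h2
        linarith
      have h1' : u i * x i ≤ |x i| := by
        rw [show |2 * x i| = 2 * |x i| by rw [abs_mul]; norm_num] at h1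
        nlinarith [h1]
      have heq : u i * x i = |x i| := le_antisymm h1' h2'
      have : u i * x i = sgn' (x i) * x i := by rw [heq, sgn'_mul_self]
      exact mul_right_cancel₀ hx this
    · intro his
      have hx := (hsupp i).2 his
      have h1 := subgrad_coord hu i 1
      have h2 := subgrad_coord hu i (-1)
      rw [hx] at h1 h2
      simp at h1 h2
      rw [abs_le]
      constructor <;> linarith
  · intro hu y
    rw [inner_euclid]
    have hcoord : ∀ j : Fin d, |x j| + u j * ((y - x) j) ≤ |y j| := by
      intro j
      have hsub : (y - x : EuclideanSpace ℝ (Fin d)) j = y j - x j := rfl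
      rw [hsub]
      rcases lt_or_ge (j : ℕ) s with hj | hj
      · have huj := (hu j).1 hj
        have hxj : sgn' (x j) * x j = |x j| := sgn'_mul_self _
        have hyj : sgn' (x j) * y j ≤ |y j| := by
          calc sgn' (x j) * y j ≤ |sgn' (x j) * y j| := le_abs_self _
            _ = |y j| := by rw [abs_mul, abs_sgn', one_mul]
        rw [huj]
        nlinarith [hxj, hyj]
      · have huj := (hu j).2 hj
        have hxj := (hsupp j).2 hj
        rw [hxj]
        simp only [abs_zero, sub_zero, zero_add]
        calc u j * y j ≤ |u j * y j| := le_abs_self _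
          _ = |u j| * |y j| := abs_mul _ _
          _ ≤ 1 * |y j| := mul_le_mul_of_nonneg_right huj (abs_nonneg _)
          _ = |y j| := one_mul _
    calc (∑ i, |x i|) + ∑ j, u j * ((y - x) j)
        = ∑ j, (|x j| + u j * ((y - x) j)) := by rw [Finset.sum_add_distrib]
      _ ≤ ∑ j, |y j| := Finset.sum_le_sum (fun j _ => hcoord j)

lemma smul_subdiff_l1 {d s : ℕ} {τ : ℝ} (hτ : 0 ≤ τ) (w : Fin d → ℝ) (hw : ∀ i, |w i| = 1) :
    τ • {u : EuclideanSpace ℝ (Fin d) |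
          ∀ i : Fin d, ((i : ℕ) < s → u i = w i) ∧ (s ≤ (i : ℕ) → |u i| ≤ 1)}
      = {v : EuclideanSpace ℝ (Fin d) |
          ∀ i : Fin d, ((i : ℕ) < s → v i = τ * w i) ∧ (s ≤ (i : ℕ) → |v i| ≤ τ)} := by
  ext v
  rw [Set.mem_smul_set]
  constructor
  · rintro ⟨u, hu, rfl⟩
    intro i
    have hsm : (τ • u) i = τ * u i := rfl
    constructor
    · intro his
      rw [hsm, (hu i).1 his]
    · intro his
      rw [hsm, abs_mul, abs_of_nonneg hτ]
      calc τ * |u i| ≤ τ * 1 := mul_le_mul_of_nonneg_left ((hu i).2 his) hτ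
        _ = τ := mul_one τ
  · intro hv
    rcases eq_or_lt_of_le hτ with rfl | hτ'
    · refine ⟨WithLp.toLp 2 (fun i => w i), fun i => ⟨fun _ => rfl, fun _ => (hw i).le⟩, ?_⟩
      rw [zero_smul]
      have : ∀ i, v i = 0 := by
        intro i
        rcases lt_or_ge (i : ℕ) s with his | his
        · rw [(hv i).1 his]; ring
        · have := (hv i).2 his
          have := abs_nonneg (v i)
          have : |v i| = 0 := le_antisymm ((hv i).2 his) (abs_nonneg _)
          exact abs_eq_zero.mp this
      ext i
      exact (this i).symm
    · refine ⟨τ⁻¹ • v, ?_, smul_inv_smul₀ (ne_of_gt hτ') v⟩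
      intro i
      have hsm : (τ⁻¹ • v) i = τ⁻¹ * v i := rfl
      constructor
      · intro his
        rw [hsm, (hv i).1 his, ← mul_assoc, inv_mul_cancel₀ (ne_of_gt hτ'), one_mul]
      · intro his
        rw [hsm, abs_mul, abs_of_nonneg (inv_nonneg.mpr hτ)]
        calc τ⁻¹ * |v i| ≤ τ⁻¹ * τ := mul_le_mul_of_nonneg_left ((hv i).2 his) (inv_nonneg.mpr hτ)
          _ = 1 := inv_mul_cancel₀ (ne_of_gt hτ')

lemma clamp_sq {τ : ℝ} (hτ : 0 ≤ τ) (t : ℝ) :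
    (t - max (-τ) (min t τ)) ^ 2 = (max (|t| - τ) 0) ^ 2 := by
  rcases le_total t (-τ) with h1 | h1
  · rw [min_eq_left (by linarith), max_eq_left (by linarith),
      abs_of_nonpos (by linarith), max_eq_left (by linarith : (0:ℝ) ≤ -t - τ)]
    ring
  · rcases le_total τ t with h2 | h2
    · rw [min_eq_right h2, max_eq_right (by linarith : -τ ≤ τ),
        abs_of_nonneg (by linarith), max_eq_left (by linarith : (0:ℝ) ≤ t - τ)]
    · rw [min_eq_left h2, max_eq_right h1]
      have habs : |t| ≤ τ := abs_le.mpr ⟨h1, h2⟩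
      rw [max_eq_right (by linarith : |t| - τ ≤ 0)]
      ring

lemma clamp_min {τ : ℝ} (hτ : 0 ≤ τ) (t v : ℝ) (hv : |v| ≤ τ) :
    (t - max (-τ) (min t τ)) ^ 2 ≤ (t - v) ^ 2 := by
  rcases abs_le.mp hv with ⟨hv1, hv2⟩
  rcases le_total t (-τ) with h1 | h1
  · rw [min_eq_left (by linarith), max_eq_left (by linarith)]
    nlinarith
  · rcases le_total τ t with h2 | h2
    · rw [min_eq_right h2, max_eq_right (by linarith : -τ ≤ τ)]
      nlinarith
    · rw [min_eq_left h2, max_eq_right h1]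
      nlinarith

lemma clamp_abs_le {τ : ℝ} (hτ : 0 ≤ τ) (t : ℝ) : |max (-τ) (min t τ)| ≤ τ := by
  rw [abs_le]
  constructor
  · exact le_max_left _ _
  · exact max_le (by linarith) (min_le_right _ _)

lemma dist_sq_formula {d s : ℕ} {τ : ℝ} (hτ : 0 ≤ τ) (w : Fin d → ℝ)
    (g : EuclideanSpace ℝ (Fin d)) :
    (Metric.infDist g {v : EuclideanSpace ℝ (Fin d) |
        ∀ i : Fin d, ((i : ℕ) < s → v i = τ * w i) ∧ (s ≤ (i : ℕ) → |v i| ≤ τ)}) ^ 2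
      = ∑ i : Fin d, (if (i : ℕ) < s then (g i - τ * w i) ^ 2 else (max (|g i| - τ) 0) ^ 2) := by
  classical
  set T : Set (EuclideanSpace ℝ (Fin d)) := {v : EuclideanSpace ℝ (Fin d) |
        ∀ i : Fin d, ((i : ℕ) < s → v i = τ * w i) ∧ (s ≤ (i : ℕ) → |v i| ≤ τ)} with hT
  set p : EuclideanSpace ℝ (Fin d) :=
    WithLp.toLp 2 (fun i : Fin d => if (i : ℕ) < s then τ * w i else max (-τ) (min (g i) τ)) with hp
  have hpappl : ∀ i : Fin d, p i = if (i : ℕ) < s then τ * w i else max (-τ) (min (g i) τ) :=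
    fun i => rfl
  have hpT : p ∈ T := by
    intro i
    constructor
    · intro his
      rw [hpappl, if_pos his]
    · intro his
      rw [hpappl, if_neg (by omega)]
      exact clamp_abs_le hτ _
  have hanti : ∀ v ∈ T, dist g p ≤ dist g v := by
    intro v hv
    rw [EuclideanSpace.dist_eq, EuclideanSpace.dist_eq]
    apply Real.sqrt_le_sqrt
    apply Finset.sum_le_sum
    intro i _
    rw [Real.dist_eq, Real.dist_eq, sq_abs, sq_abs]
    by_cases his : (i : ℕ) < s
    · rw [hpappl, if_pos his, (hv i).1 his]
    · rw [hpappl, if_neg his]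
      exact clamp_min hτ _ _ ((hv i).2 (by omega))
  have hinf : Metric.infDist g T = dist g p := by
    apply le_antisymm (Metric.infDist_le_dist_of_mem hpT)
    rw [Metric.infDist_eq_iInf]
    haveI : Nonempty T := ⟨⟨p, hpT⟩⟩
    exact le_ciInf fun v => hanti v v.2
  rw [hinf, EuclideanSpace.dist_eq, Real.sq_sqrt (Finset.sum_nonneg fun i _ => sq_nonneg _)]
  apply Finset.sum_congr rfl
  intro i _
  rw [Real.dist_eq, sq_abs]
  by_cases his : (i : ℕ) < s
  · rw [hpappl, if_pos his, if_pos his]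
  · rw [hpappl, if_neg his, if_neg his]
    exact clamp_sq hτ _

lemma pi_map_eval {d : ℕ} (i : Fin d) :
    (Measure.pi fun _ : Fin d => gaussianReal 0 1).map (fun y => y i) = gaussianReal 0 1 := by
  classical
  apply Measure.ext
  intro t ht
  rw [Measure.map_apply (measurable_pi_apply i) ht]
  have hpre : (fun y : Fin d → ℝ => y i) ⁻¹' t
      = Set.pi Set.univ (fun j => if j = i then t else Set.univ) := by
    ext y
    simp only [Set.mem_preimage, Set.mem_univ_pi]
    constructor
    · intro h j
      by_cases hj : j = i <;> simp [hj, h]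
    · intro h
      have := h i
      simpa using this
  rw [hpre, Measure.pi_pi]
  rw [Finset.prod_eq_single i (fun j _ hj => by simp [hj])
    (fun h => absurd (Finset.mem_univ i) h)]
  simp

lemma euclid_apply_measurable {d : ℕ} (i : Fin d) :
    Measurable (fun g : EuclideanSpace ℝ (Fin d) => g i) :=
  (measurable_pi_apply i).comp (MeasurableEquiv.toLp 2 (Fin d → ℝ)).symm.measurable

lemma integral_pi_eval {d : ℕ} (i : Fin d) (F : ℝ → ℝ) (hF : Measurable F) :
    ∫ y : Fin d → ℝ, F (y i) ∂(Measure.pi fun _ : Fin d => gaussianReal 0 1)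
      = ∫ t, F t ∂(gaussianReal 0 1) := by
  calc ∫ y : Fin d → ℝ, F (y i) ∂(Measure.pi fun _ : Fin d => gaussianReal 0 1)
      = ∫ t, F t ∂((Measure.pi fun _ : Fin d => gaussianReal 0 1).map (fun y => y i)) :=
        (integral_map (measurable_pi_apply i).aemeasurable hF.aestronglyMeasurable).symm
    _ = ∫ t, F t ∂(gaussianReal 0 1) := by rw [pi_map_eval i]

lemma integrable_pi_eval {d : ℕ} (i : Fin d) (F : ℝ → ℝ) (hF : Measurable F)
    (h : Integrable F (gaussianReal 0 1)) :
    Integrable (fun y : Fin d → ℝ => F (y i)) (Measure.pi fun _ : Fin d => gaussianReal 0 1) := by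
  have h1 : Integrable F ((Measure.pi fun _ : Fin d => gaussianReal 0 1).map (fun y => y i)) := by
    rw [pi_map_eval i]; exact h
  exact (integrable_map_measure hF.aestronglyMeasurable
    (measurable_pi_apply i).aemeasurable).mp h1

lemma card_filter_lt {d s : ℕ} (hsd : s ≤ d) :
    (Finset.univ.filter fun i : Fin d => (i : ℕ) < s).card = s := by
  apply Finset.card_eq_of_bijective (fun k hk => ⟨k, lt_of_lt_of_le hk hsd⟩)
  · intro a ha
    rw [Finset.mem_filter] at ha
    exact ⟨a, ha.2, by simp⟩
  · intro k hk
    rw [Finset.mem_filter]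
    exact ⟨Finset.mem_univ _, hk⟩
  · intro i j hi hj hij
    simpa using congrArg Fin.val hij


end Aux

/-- For `x ∈ ℝ^d` with its first `s` entries nonzero and the rest zero, the expected
squared distance from a standard Gaussian vector to the dilated subdifferential
`τ·∂‖x‖₁` equals `s(1+τ²) + (d−s)·√(2/π)·∫_τ^∞ (u−τ)² e^{−u²/2} du`. -/
theorem expected_dist_sq_l1_subdiff (d s : ℕ) (hs : 1 ≤ s) (hsd : s ≤ d)
    (x : EuclideanSpace ℝ (Fin d))
    (hsupp : ∀ i : Fin d, ((i : ℕ) < s → x i ≠ 0) ∧ (s ≤ (i : ℕ) → x i = 0))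
    (τ : ℝ) (hτ : 0 ≤ τ) :
    ∫ g, (Metric.infDist g (τ • subdiff (fun y => ∑ i, |y i|) x)) ^ 2 ∂(stdGaussian d)
      = (s : ℝ) * (1 + τ ^ 2)
        + ((d : ℝ) - s) * Real.sqrt (2 / π)
          * ∫ u in Set.Ioi τ, (u - τ) ^ 2 * Real.exp (-u ^ 2 / 2) := by
  classical
  set w : Fin d → ℝ := fun i => sgn' (x i) with hw
  set D : Fin d → ℝ → ℝ :=
    fun i t => if (i : ℕ) < s then (t - τ * w i) ^ 2 else (max (|t| - τ) 0) ^ 2 with hD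
  set J : ℝ := ∫ u in Set.Ioi τ, (u - τ) ^ 2 * Real.exp (-u ^ 2 / 2) with hJ
  have hDcont : ∀ i, Continuous (D i) := by
    intro i
    rw [hD]
    by_cases his : (i : ℕ) < s
    · simp only [if_pos his]
      fun_prop
    · simp only [if_neg his]
      exact ((continuous_abs.sub continuous_const).max continuous_const).pow 2
  have hDmeas : ∀ i, Measurable (D i) := fun i => (hDcont i).measurable
  have hDbound : ∀ i t, |D i t| ≤ 2 * t ^ 2 + (2 * τ ^ 2 + 1) := by
    intro i t
    rw [hD]
    by_cases his : (i : ℕ) < s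
    · simp only [if_pos his]
      rw [abs_of_nonneg (sq_nonneg _)]
      have hwsq : (w i) ^ 2 = 1 := sq_sgn' _
      nlinarith [sq_nonneg (t + τ * w i), sq_nonneg t, sq_nonneg τ]
    · simp only [if_neg his]
      rw [abs_of_nonneg (sq_nonneg _)]
      have h1 : max (|t| - τ) 0 ≤ |t| := max_le (by linarith [abs_nonneg t]) (abs_nonneg t)
      have h2 : (max (|t| - τ) 0) ^ 2 ≤ t ^ 2 := by
        rw [← sq_abs t]
        exact pow_le_pow_left₀ (le_max_right _ _) h1 2
      nlinarith [sq_nonneg t, sq_nonneg τ]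
  have hDint : ∀ i, Integrable (D i) (gaussianReal 0 1) :=
    fun i => gauss_integrable (D i) (hDcont i) 2 (2 * τ ^ 2 + 1) (hDbound i)
  -- rewrite the set
  rw [subdiff_l1 x hsupp, smul_subdiff_l1 hτ w (fun i => abs_sgn' _)]
  -- rewrite the integrand
  have h1 : ∫ g, (Metric.infDist g {v : EuclideanSpace ℝ (Fin d) |
        ∀ i : Fin d, ((i : ℕ) < s → v i = τ * w i) ∧ (s ≤ (i : ℕ) → |v i| ≤ τ)}) ^ 2
          ∂(stdGaussian d)
      = ∫ g, (∑ i : Fin d, D i (g i)) ∂(stdGaussian d) :=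
    integral_congr_ae (Filter.Eventually.of_forall (fun g => dist_sq_formula hτ w g))
  rw [h1]
  have hGmeas : Measurable (fun g : EuclideanSpace ℝ (Fin d) => ∑ i : Fin d, D i (g i)) :=
    Finset.measurable_sum _ fun i _ => (hDmeas i).comp (euclid_apply_measurable i)
  have h2 : ∫ g, (∑ i : Fin d, D i (g i)) ∂(stdGaussian d)
      = ∫ y : Fin d → ℝ, (∑ i : Fin d, D i (y i))
          ∂(Measure.pi fun _ : Fin d => gaussianReal 0 1) := by
    unfold _root_.stdGaussian
    rw [integral_map (MeasurableEquiv.toLp 2 (Fin d → ℝ)).measurable.aemeasurable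
      hGmeas.aestronglyMeasurable]
    rfl
  rw [h2, integral_finset_sum Finset.univ
    (fun i _ => integrable_pi_eval i (D i) (hDmeas i) (hDint i))]
  have h4 : ∀ i : Fin d, ∫ y : Fin d → ℝ, D i (y i)
      ∂(Measure.pi fun _ : Fin d => gaussianReal 0 1)
      = if (i : ℕ) < s then 1 + τ ^ 2 else Real.sqrt (2 / π) * J := by
    intro i
    rw [integral_pi_eval i (D i) (hDmeas i)]
    by_cases his : (i : ℕ) < s
    · rw [if_pos his]
      have : D i = fun t => (t - τ * w i) ^ 2 := by
        funext t; rw [hD]; simp [his]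
      rw [this, gauss_shift (τ * w i), mul_pow, sq_sgn']
      ring_nf
    · rw [if_neg his]
      have : D i = fun t => (max (|t| - τ) 0) ^ 2 := by
        funext t; rw [hD]; simp [his]
      rw [this, gauss_max hτ]
  simp_rw [h4]
  rw [Finset.sum_ite, Finset.sum_const, Finset.sum_const, card_filter_lt hsd]
  have hcard : (Finset.univ.filter fun i : Fin d => ¬ (i : ℕ) < s).card = d - s := by
    have := Finset.card_filter_add_card_filter_not
      (s := (Finset.univ : Finset (Fin d))) (p := fun i : Fin d => (i : ℕ) < s)
    rw [card_filter_lt hsd, Finset.card_univ, Fintype.card_fin] at this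
    omega
  rw [hcard, nsmul_eq_mul, nsmul_eq_mul, Nat.cast_sub hsd]
  push_cast
  ring
end
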